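/- Let A and B be n×n complex Hermitian matrices. Then trace(exp(A + B)) ≤ trace(exp(A)·exp(B)). In particular, the right-hand side is a real number. -/

import Mathlib

open Matrix NormedSpace Complex Filter

namespace GoldenThompsonAux

variable {n : ℕ}

/-! ### Trace Cauchy-Schwarz -/

lemma trace_mul_eq_sum (M N : Matrix (Fin n) (Fin n) ℂ) :
    (M * N).trace = ∑ p : Fin n × Fin n, M p.1 p.2 * N p.2 p.1 := by
  rw [Fintype.sum_prod_type, Matrix.trace]
  simp [Matrix.diag, Matrix.mul_apply]

lemma trace_mul_conj_re (M : Matrix (Fin n) (Fin n) ℂ) :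
    (M * Mᴴ).trace.re = ∑ p : Fin n × Fin n, ‖M p.1 p.2‖ ^ 2 := by
  rw [trace_mul_eq_sum, Complex.re_sum]
  congr 1; ext p
  show (M p.1 p.2 * (starRingEnd ℂ) (M p.1 p.2)).re = _
  rw [Complex.mul_conj']; norm_cast

lemma trace_mul_conj_re_nonneg (M : Matrix (Fin n) (Fin n) ℂ) :
    0 ≤ (M * Mᴴ).trace.re := by
  rw [trace_mul_conj_re]
  positivity

lemma trace_cs (M N : Matrix (Fin n) (Fin n) ℂ) :
    ‖(M * N).trace‖ ≤
      Real.sqrt ((M * Mᴴ).trace.re) * Real.sqrt ((N * Nᴴ).trace.re) := by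
  classical
  set x : EuclideanSpace ℂ (Fin n × Fin n) := WithLp.toLp 2 (fun p : Fin n × Fin n => (starRingEnd ℂ) (M p.1 p.2)) with hx
  set y : EuclideanSpace ℂ (Fin n × Fin n) := WithLp.toLp 2 (fun p : Fin n × Fin n => N p.2 p.1) with hy
  have h1 : (M * N).trace = @inner ℂ _ _ x y := by
    rw [trace_mul_eq_sum]
    simp [hx, hy, PiLp.inner_apply, RingHom.congr_fun]
    exact Finset.sum_congr rfl (fun p _ => mul_comm _ _)
  have h2 : Real.sqrt ((M * Mᴴ).trace.re) = ‖x‖ := by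
    rw [trace_mul_conj_re, EuclideanSpace.norm_eq]
    congr 1
    simp [hx]
  have h3 : Real.sqrt ((N * Nᴴ).trace.re) = ‖y‖ := by
    rw [trace_mul_conj_re, EuclideanSpace.norm_eq]
    rw [← Equiv.sum_comp (Equiv.prodComm (Fin n) (Fin n)) (fun p => ‖y p‖ ^ 2)]
    congr 1
  rw [h1, h2, h3]
  exact norm_inner_le_norm (𝕜 := ℂ) x y

/-! ### Cyclic trace identities and hermitian trace facts -/

lemma pow_succ_conj (M N : Matrix (Fin n) (Fin n) ℂ) (p : ℕ) :
    (M * N) ^ (p + 1) = M * (N * M) ^ p * N := by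
  induction p with
  | zero => simp
  | succ p ih => rw [pow_succ, ih, pow_succ]; noncomm_ring

lemma trace_pow_mul_comm (M N : Matrix (Fin n) (Fin n) ℂ) (p : ℕ) :
    ((M * N) ^ p).trace = ((N * M) ^ p).trace := by
  cases p with
  | zero => rfl
  | succ p =>
    rw [pow_succ_conj, Matrix.trace_mul_comm, ← Matrix.mul_assoc, pow_succ']

lemma conj_eq_im_zero {z : ℂ} (h : (starRingEnd ℂ) z = z) : z.im = 0 := by
  have := congrArg Complex.im h
  simp only [Complex.conj_im] at this
  linarith

lemma herm_mul_trace_im {P Q : Matrix (Fin n) (Fin n) ℂ} (hP : P.IsHermitian)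
    (hQ : Q.IsHermitian) : (P * Q).trace.im = 0 := by
  apply conj_eq_im_zero
  have := Matrix.trace_conjTranspose (P * Q)
  rw [Matrix.conjTranspose_mul, hP.eq, hQ.eq, Matrix.trace_mul_comm] at this
  exact this.symm

/-! ### Specialized Cauchy-Schwarz -/

lemma trace_cs_self (C : Matrix (Fin n) (Fin n) ℂ) :
    ‖(C * C).trace‖ ≤ ((C * Cᴴ).trace).re := by
  have h := trace_cs C C
  rwa [Real.mul_self_sqrt (trace_mul_conj_re_nonneg C)] at h

lemma trace_cs_herm {P Q : Matrix (Fin n) (Fin n) ℂ} (hP : P.IsHermitian) (hQ : Q.IsHermitian)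
    (h : (P * P).trace.re = (Q * Q).trace.re) :
    ‖(P * Q).trace‖ ≤ ((Q * Q).trace).re := by
  have hcs := trace_cs P Q
  rw [hP.eq, hQ.eq, h, Real.mul_self_sqrt] at hcs
  · exact hcs
  · have := trace_mul_conj_re_nonneg Q; rwa [hQ.eq] at this

lemma herm_mul_self {X : Matrix (Fin n) (Fin n) ℂ} (hX : X.IsHermitian) :
    (X * X).IsHermitian := by
  have := hX.pow 2
  rwa [pow_two] at this

/-! ### The key combinatorial induction -/

theorem key_induction (k : ℕ) :
    (∀ X Y : Matrix (Fin n) (Fin n) ℂ, X.IsHermitian → Y.IsHermitian →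
      ((X * Y) ^ (2^k)).trace.re ≤ ((X ^ (2^k)) * (Y ^ (2^k))).trace.re) ∧
    (∀ C : Matrix (Fin n) (Fin n) ℂ,
      ‖(C ^ (2^(k+1))).trace‖ ≤ (((C * Cᴴ) ^ (2^k)).trace).re) := by
  induction k with
  | zero =>
    refine ⟨fun X Y hX hY => by simp, fun C => by simpa [pow_two] using trace_cs_self C⟩
  | succ k ih =>
    obtain ⟨G, L⟩ := ih
    have hG : ∀ X Y : Matrix (Fin n) (Fin n) ℂ, X.IsHermitian → Y.IsHermitian →
        ((X * Y) ^ (2^(k+1))).trace.re ≤ ((X ^ (2^(k+1))) * (Y ^ (2^(k+1)))).trace.re := by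
      intro X Y hX hY
      have e1 : ((X * Y) ^ (2^(k+1))).trace.re ≤ ‖((X * Y) ^ (2^(k+1))).trace‖ :=
        Complex.re_le_norm _
      have e2 := L (X * Y)
      have e3 : (X * Y) * (X * Y)ᴴ = (X * (Y * Y)) * X := by
        rw [Matrix.conjTranspose_mul, hX.eq, hY.eq]
        noncomm_ring
      have e4 : (((X * Y) * (X * Y)ᴴ) ^ (2^k)).trace = (((X * X) * (Y * Y)) ^ (2^k)).trace := by
        rw [e3, trace_pow_mul_comm (X * (Y * Y)) X]
        congr 2
        noncomm_ring
      have e5 := G (X * X) (Y * Y) (herm_mul_self hX) (herm_mul_self hY)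
      have e6 : ((X * X) ^ (2^k)) * ((Y * Y) ^ (2^k)) = (X ^ (2^(k+1))) * (Y ^ (2^(k+1))) := by
        rw [← pow_two X, ← pow_two Y, ← pow_mul, ← pow_mul]
        ring_nf
      calc ((X * Y) ^ (2^(k+1))).trace.re
          ≤ ‖((X * Y) ^ (2^(k+1))).trace‖ := e1
        _ ≤ ((((X * Y) * (X * Y)ᴴ) ^ (2^k)).trace).re := e2
        _ = ((((X * X) * (Y * Y)) ^ (2^k)).trace).re := by rw [e4]
        _ ≤ (((X * X) ^ (2^k)) * ((Y * Y) ^ (2^k))).trace.re := e5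
        _ = ((X ^ (2^(k+1))) * (Y ^ (2^(k+1)))).trace.re := by rw [e6]
    refine ⟨hG, ?_⟩
    intro C
    have h1 : (C ^ (2^(k+2))) = (C * C) ^ (2^(k+1)) := by
      rw [← pow_two C, ← pow_mul]
      ring_nf
    have h2 := L (C * C)
    have h3 : ((C * C) * (C * C)ᴴ) = (C * (C * (Cᴴ * Cᴴ))) := by
      rw [Matrix.conjTranspose_mul]
      noncomm_ring
    have h4 : (((C * C) * (C * C)ᴴ) ^ (2^k)).trace
        = (((C * Cᴴ) * (Cᴴ * C)) ^ (2^k)).trace := by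
      rw [h3, trace_pow_mul_comm C (C * (Cᴴ * Cᴴ))]
      congr 2
      noncomm_ring
    have hXh : (C * Cᴴ).IsHermitian := Matrix.isHermitian_mul_conjTranspose_self C
    have hYh : (Cᴴ * C).IsHermitian := by
      simpa using Matrix.isHermitian_mul_conjTranspose_self Cᴴ
    have h5 := G (C * Cᴴ) (Cᴴ * C) hXh hYh
    have hPh : ((C * Cᴴ) ^ (2^k)).IsHermitian := hXh.pow _
    have hQh : ((Cᴴ * C) ^ (2^k)).IsHermitian := hYh.pow _
    have heq : (((C * Cᴴ) ^ (2^k)) * ((C * Cᴴ) ^ (2^k))).trace.re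
        = (((Cᴴ * C) ^ (2^k)) * ((Cᴴ * C) ^ (2^k))).trace.re := by
      rw [← pow_add, ← pow_add, trace_pow_mul_comm]
    have h6 := trace_cs_herm hPh hQh heq
    have h7 : (((Cᴴ * C) ^ (2^k)) * ((Cᴴ * C) ^ (2^k))).trace
        = ((C * Cᴴ) ^ (2^(k+1))).trace := by
      rw [← pow_add, trace_pow_mul_comm]
      congr 2
      ring_nf
    calc ‖(C ^ (2^(k+1+1))).trace‖
        = ‖((C * C) ^ (2^(k+1))).trace‖ := by rw [h1]
      _ ≤ ((((C * C) * (C * C)ᴴ) ^ (2^k)).trace).re := h2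
      _ = ((((C * Cᴴ) * (Cᴴ * C)) ^ (2^k)).trace).re := by rw [h4]
      _ ≤ (((C * Cᴴ) ^ (2^k)) * ((Cᴴ * C) ^ (2^k))).trace.re := h5
      _ ≤ ‖(((C * Cᴴ) ^ (2^k)) * ((Cᴴ * C) ^ (2^k))).trace‖ := Complex.re_le_norm _
      _ ≤ (((Cᴴ * C) ^ (2^k)) * ((Cᴴ * C) ^ (2^k))).trace.re := h6
      _ = (((C * Cᴴ) ^ (2^(k+1))).trace).re := by rw [h7]

/-! ### Analysis lemmas in a general Banach algebra -/

section Analysis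
variable {𝔸 : Type*} [NormedRing 𝔸] [NormedAlgebra ℝ 𝔸] [CompleteSpace 𝔸] [NormOneClass 𝔸]

omit [CompleteSpace 𝔸] in
lemma norm_exp_le_exp_norm' (x : 𝔸) : ‖NormedSpace.exp x‖ ≤ Real.exp ‖x‖ := by
  rw [exp_eq_tsum ℝ, Real.exp_eq_exp_ℝ, exp_eq_tsum_div]
  refine (norm_tsum_le_tsum_norm (norm_expSeries_summable' x)).trans ?_
  refine Summable.tsum_le_tsum (fun i => ?_) (norm_expSeries_summable' x) ?_
  · calc ‖((i.factorial : ℝ)⁻¹) • x ^ i‖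
        ≤ (i.factorial : ℝ)⁻¹ * ‖x ^ i‖ := by
          rw [norm_smul]; gcongr; simp [abs_of_nonneg]
      _ ≤ ‖x‖ ^ i / (i.factorial : ℝ) := by
          rw [div_eq_inv_mul]; gcongr; exact norm_pow_le x i
  · exact Real.summable_pow_div_factorial ‖x‖

omit [NormedAlgebra ℝ 𝔸] [CompleteSpace 𝔸] in
lemma norm_pow_sub_pow_le' (X Y : 𝔸) (K : ℝ) (hK : 1 ≤ K)
    (hX : ‖X‖ ≤ K) (hY : ‖Y‖ ≤ K) (m : ℕ) :
    ‖X ^ m - Y ^ m‖ ≤ m * K ^ m * ‖X - Y‖ := by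
  induction m with
  | zero => simp
  | succ m ih =>
    have hK0 : 0 ≤ K := le_trans zero_le_one hK
    have key : X ^ (m+1) - Y ^ (m+1) = X ^ m * (X - Y) + (X ^ m - Y ^ m) * Y := by
      noncomm_ring
    calc ‖X ^ (m+1) - Y ^ (m+1)‖
        ≤ ‖X ^ m * (X - Y)‖ + ‖(X ^ m - Y ^ m) * Y‖ := by rw [key]; exact norm_add_le _ _
      _ ≤ ‖X ^ m‖ * ‖X - Y‖ + ‖X ^ m - Y ^ m‖ * ‖Y‖ :=
          add_le_add (norm_mul_le _ _) (norm_mul_le _ _)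
      _ ≤ K ^ m * ‖X - Y‖ + (m * K ^ m * ‖X - Y‖) * K := by
          gcongr
          · exact (norm_pow_le X m).trans (by gcongr)
      _ ≤ K ^ (m+1) * ‖X - Y‖ + (m * K ^ (m+1) * ‖X - Y‖) := by
          rw [pow_succ]
          have h1 : K ^ m * ‖X - Y‖ ≤ K ^ m * K * ‖X - Y‖ := by
            have : K ^ m ≤ K ^ m * K := le_mul_of_one_le_right (by positivity) hK
            gcongr
          nlinarith [norm_nonneg (X - Y), pow_nonneg hK0 m, Nat.cast_nonneg (α := ℝ) m]
      _ = (↑(m+1)) * K ^ (m+1) * ‖X - Y‖ := by push_cast; ring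

/-- Trotter-type limit along powers of two. -/
lemma trotter_pow_two (A B : 𝔸) :
    Filter.Tendsto (fun k : ℕ => (NormedSpace.exp ((1/2:ℝ)^k • A) * NormedSpace.exp ((1/2:ℝ)^k • B)) ^ (2^k))
      atTop (nhds (NormedSpace.exp (A + B))) := by
  set F : ℝ → 𝔸 := fun t => NormedSpace.exp (t • (A + B)) - NormedSpace.exp (t • A) * NormedSpace.exp (t • B) with hF
  have hd : HasDerivAt F 0 0 := by
    have h1 : HasDerivAt (fun t : ℝ => NormedSpace.exp (t • (A + B))) (NormedSpace.exp ((0:ℝ) • (A+B)) * (A+B)) 0 :=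
      hasDerivAt_exp_smul_const (A+B) 0
    have h2 : HasDerivAt (fun t : ℝ => NormedSpace.exp (t • A)) (NormedSpace.exp ((0:ℝ) • A) * A) 0 :=
      hasDerivAt_exp_smul_const A 0
    have h3 : HasDerivAt (fun t : ℝ => NormedSpace.exp (t • B)) (NormedSpace.exp ((0:ℝ) • B) * B) 0 :=
      hasDerivAt_exp_smul_const B 0
    have h4 := (h2.mul h3)
    have h5 := h1.sub h4
    convert h5 using 1
    · rfl
    · rfl
    simp [NormedSpace.exp_zero]
  have hF0 : F 0 = 0 := by simp [hF, NormedSpace.exp_zero]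
  have hlo : (fun t : ℝ => F t) =o[nhds 0] (fun t : ℝ => t) := by
    have := hasDerivAt_iff_isLittleO.mp hd
    simpa [hF0] using this
  set t : ℕ → ℝ := fun k => (1/2:ℝ)^k with ht
  have htpos : ∀ k, 0 < t k := fun k => by positivity
  have ht0 : Filter.Tendsto t atTop (nhds 0) := by
    apply tendsto_pow_atTop_nhds_zero_of_lt_one <;> norm_num
  have hprod : ∀ k, (2:ℝ)^k * t k = 1 := by
    intro k; rw [ht]; rw [← mul_pow]; norm_num
  have hkey : Filter.Tendsto (fun k => (2:ℝ)^k * ‖F (t k)‖) atTop (nhds 0) := by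
    rw [NormedAddCommGroup.tendsto_nhds_zero]
    intro ε hε
    have hev := ht0.eventually (hlo.def (half_pos hε))
    filter_upwards [hev] with k hk
    have h1 : ‖F (t k)‖ ≤ ε/2 * t k := by
      simpa [abs_of_pos (htpos k)] using hk
    have h2 : (2:ℝ)^k * ‖F (t k)‖ ≤ ε/2 := by
      calc (2:ℝ)^k * ‖F (t k)‖ ≤ (2:ℝ)^k * (ε/2 * t k) := by
            gcongr
          _ = ε/2 * ((2:ℝ)^k * t k) := by ring
          _ = ε/2 := by rw [hprod k]; ring
    have h3 : (0:ℝ) ≤ (2:ℝ)^k * ‖F (t k)‖ := by positivity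
    rw [Real.norm_eq_abs, _root_.abs_of_nonneg h3]
    linarith
  set c : ℝ := ‖A‖ + ‖B‖ + ‖A + B‖ with hc
  have hc0 : 0 ≤ c := by positivity
  have hXexp : ∀ k, (NormedSpace.exp ((t k) • (A + B))) ^ (2^k) = NormedSpace.exp (A + B) := by
    intro k
    letI : NormedAlgebra ℚ 𝔸 := .restrictScalars ℚ ℝ 𝔸
    rw [← NormedSpace.exp_nsmul, ← Nat.cast_smul_eq_nsmul ℝ, smul_smul]
    rw [show ((2^k : ℕ) : ℝ) * t k = 1 from by push_cast; exact hprod k]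
    rw [one_smul]
  have hbound : ∀ k, ‖(NormedSpace.exp ((t k) • A) * NormedSpace.exp ((t k) • B)) ^ (2^k) - NormedSpace.exp (A + B)‖
      ≤ Real.exp c * ((2:ℝ)^k * ‖F (t k)‖) := by
    intro k
    set K : ℝ := Real.exp (c * t k) with hK
    have hK1 : 1 ≤ K := Real.one_le_exp (by positivity)
    have hXn : ‖NormedSpace.exp ((t k) • (A + B))‖ ≤ K := by
      refine (norm_exp_le_exp_norm' _).trans ?_
      rw [hK]
      apply Real.exp_le_exp.mpr
      rw [norm_smul, Real.norm_eq_abs, abs_of_pos (htpos k)]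
      rw [hc]
      nlinarith [htpos k, norm_nonneg A, norm_nonneg B, norm_nonneg (A+B)]
    have hYn : ‖NormedSpace.exp ((t k) • A) * NormedSpace.exp ((t k) • B)‖ ≤ K := by
      refine (norm_mul_le _ _).trans ?_
      refine le_trans (mul_le_mul (norm_exp_le_exp_norm' _) (norm_exp_le_exp_norm' _)
        (norm_nonneg _) (Real.exp_nonneg _)) ?_
      rw [← Real.exp_add, hK]
      apply Real.exp_le_exp.mpr
      rw [norm_smul, norm_smul, Real.norm_eq_abs, abs_of_pos (htpos k), hc]
      nlinarith [htpos k, norm_nonneg A, norm_nonneg B, norm_nonneg (A+B)]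
    have hKm : K ^ (2^k : ℕ) = Real.exp c := by
      rw [hK, ← Real.exp_nat_mul]
      congr 1
      push_cast
      nlinarith [hprod k]
    have h := norm_pow_sub_pow_le' (NormedSpace.exp ((t k) • A) * NormedSpace.exp ((t k) • B))
      (NormedSpace.exp ((t k) • (A + B))) K hK1 hYn hXn (2^k)
    rw [hXexp k, hKm] at h
    refine h.trans ?_
    have : ‖NormedSpace.exp (t k • A) * NormedSpace.exp (t k • B) - NormedSpace.exp (t k • (A + B))‖ = ‖F (t k)‖ := by
      rw [hF]; rw [← norm_neg]; congr 1; simp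
    rw [this]
    push_cast
    ring_nf
    nlinarith [norm_nonneg (F (t k)), Real.exp_nonneg c, pow_nonneg (by norm_num : (0:ℝ) ≤ 2) k]
  have hz : Filter.Tendsto (fun k => Real.exp c * ((2:ℝ)^k * ‖F (t k)‖)) atTop (nhds 0) := by
    simpa using hkey.const_mul (Real.exp c)
  rw [tendsto_iff_norm_sub_tendsto_zero]
  exact squeeze_zero (fun k => norm_nonneg _) hbound hz

end Analysis

end GoldenThompsonAux

open GoldenThompsonAux in
theorem golden_thompson {n : ℕ} (A B : Matrix (Fin n) (Fin n) ℂ)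
    (hA : A.IsHermitian) (hB : B.IsHermitian) :
    (NormedSpace.exp (A + B)).trace.re ≤ (NormedSpace.exp A * NormedSpace.exp B).trace.re ∧
      (NormedSpace.exp A * NormedSpace.exp B).trace.im = 0 := by
  have hEA : (NormedSpace.exp A).IsHermitian := hA.exp
  have hEB : (NormedSpace.exp B).IsHermitian := hB.exp
  refine ⟨?_, herm_mul_trace_im hEA hEB⟩
  rcases Nat.eq_zero_or_pos n with hn | hn
  · subst hn
    simp [Matrix.trace]
  -- now n > 0
  letI : Nonempty (Fin n) := ⟨⟨0, hn⟩⟩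
  letI : SeminormedRing (Matrix (Fin n) (Fin n) ℂ) := Matrix.linftyOpSemiNormedRing
  letI : NormedRing (Matrix (Fin n) (Fin n) ℂ) := Matrix.linftyOpNormedRing
  letI : NormedAlgebra ℝ (Matrix (Fin n) (Fin n) ℂ) := Matrix.linftyOpNormedAlgebra
  letI : NormOneClass (Matrix (Fin n) (Fin n) ℂ) := Matrix.linfty_opNormOneClass
  -- the approximating sequence
  letI : NormedAlgebra ℚ (Matrix (Fin n) (Fin n) ℂ) := .restrictScalars ℚ ℝ _
  set t : ℕ → ℝ := fun k => (1/2:ℝ)^k with ht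
  have htr := trotter_pow_two A B
  have hcont : Continuous (fun M : Matrix (Fin n) (Fin n) ℂ => M.trace.re) :=
    Complex.continuous_re.comp (Continuous.matrix_trace continuous_id)
  have htr2 : Filter.Tendsto
      (fun k : ℕ => ((NormedSpace.exp ((t k) • A) * NormedSpace.exp ((t k) • B)) ^ (2^k)).trace.re)
      atTop (nhds ((NormedSpace.exp (A + B)).trace.re)) :=
    (hcont.tendsto _).comp htr
  refine le_of_tendsto htr2 (Filter.Eventually.of_forall ?_)
  intro k
  have hXh : ((t k) • A).IsHermitian := by
    rw [Matrix.IsHermitian, Matrix.conjTranspose_smul, hA.eq]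
    norm_num
  have hYh : ((t k) • B).IsHermitian := by
    rw [Matrix.IsHermitian, Matrix.conjTranspose_smul, hB.eq]
    norm_num
  have hXe : (NormedSpace.exp ((t k) • A)).IsHermitian := hXh.exp
  have hYe : (NormedSpace.exp ((t k) • B)).IsHermitian := hYh.exp
  have hle := (key_induction k).1 _ _ hXe hYe
  have hprodk : ((2^k : ℕ) : ℝ) * t k = 1 := by
    rw [ht]; push_cast; rw [← mul_pow]; norm_num
  have hpowA : (NormedSpace.exp ((t k) • A)) ^ (2^k) = NormedSpace.exp A := by
    have h := NormedSpace.exp_nsmul (2^k) ((t k) • A)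
    rw [← Nat.cast_smul_eq_nsmul ℝ, smul_smul, hprodk, one_smul] at h
    exact h.symm
  have hpowB : (NormedSpace.exp ((t k) • B)) ^ (2^k) = NormedSpace.exp B := by
    have h := NormedSpace.exp_nsmul (2^k) ((t k) • B)
    rw [← Nat.cast_smul_eq_nsmul ℝ, smul_smul, hprodk, one_smul] at h
    exact h.symm
  rwa [hpowA, hpowB] at hle
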